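/- Let n ≥ 1, θ, ν ∈ ℝ, and δ, λ > 0. Define Γ = (2λ − δ) I + δ 𝟙𝟙ᵀ, the externality e(x) = Γ x, and the Nash equilibrium map x*(p) = ((θ − ν)/(δ(n+1))) 𝟙 + Ω p with Ω = −(1/δ) I + (1/(δ(n+1))) 𝟙𝟙ᵀ. Then there exists exactly one p† ∈ ℝⁿ satisfying the fixed-point condition e(x*(p†)) = p†. -/
import Mathlib


open Matrix

/-- The all-ones matrix `𝟙𝟙ᵀ ∈ ℝ^{n×n}`. -/
def onesMatrix (n : ℕ) : Matrix (Fin n) (Fin n) ℝ := Matrix.of fun _ _ => (1 : ℝ)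

/-- The Cournot externality matrix `Γ = (2λ − δ) I + δ 𝟙𝟙ᵀ`. -/
noncomputable def cournotGamma (n : ℕ) (δ lam : ℝ) : Matrix (Fin n) (Fin n) ℝ :=
  (2 * lam - δ) • (1 : Matrix (Fin n) (Fin n) ℝ) + δ • onesMatrix n

/-- The linear part of the Cournot Nash equilibrium map,
`Ω = −(1/δ) I + (1/(δ(n+1))) 𝟙𝟙ᵀ`. -/
noncomputable def cournotOmega (n : ℕ) (δ : ℝ) : Matrix (Fin n) (Fin n) ℝ :=
  -(1 / δ) • (1 : Matrix (Fin n) (Fin n) ℝ) + (1 / (δ * (n + 1))) • onesMatrix n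

/-- The Cournot Nash equilibrium map `x*(p) = ((θ − ν)/(δ(n+1))) 𝟙 + Ω p`. -/
noncomputable def cournotNash (n : ℕ) (θ ν δ : ℝ) (p : Fin n → ℝ) : Fin n → ℝ :=
  ((θ - ν) / (δ * (n + 1))) • (fun _ => (1 : ℝ)) + (cournotOmega n δ).mulVec p

lemma onesMatrix_mul_self (n : ℕ) :
    onesMatrix n * onesMatrix n = (n : ℝ) • onesMatrix n := by
  ext i j
  simp [onesMatrix, Matrix.mul_apply]

lemma form_mul (n : ℕ) (a b c d : ℝ) :
    (a • (1 : Matrix (Fin n) (Fin n) ℝ) + b • onesMatrix n) *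
      (c • (1 : Matrix (Fin n) (Fin n) ℝ) + d • onesMatrix n)
    = (a * c) • (1 : Matrix (Fin n) (Fin n) ℝ)
      + (a * d + b * c + b * d * n) • onesMatrix n := by
  rw [add_mul, mul_add, mul_add]
  rw [smul_mul_assoc, smul_mul_assoc, smul_mul_assoc, smul_mul_assoc,
    mul_smul_comm, mul_smul_comm, mul_smul_comm, mul_smul_comm]
  simp only [one_mul, mul_one, onesMatrix_mul_self]
  module

/-- existence-and-uniqueness part of Proposition 4:
with externality `e(x) = Γx` and equilibrium map `x*(p)`, there exists exactly one
incentive `p†` satisfying `e(x*(p†)) = p†`. -/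
theorem cournot_unique_optimal_incentive
    (n : ℕ) (hn : 1 ≤ n) (θ ν δ lam : ℝ) (hδ : 0 < δ) (hlam : 0 < lam) :
    ∃! pdag : Fin n → ℝ,
      (cournotGamma n δ lam).mulVec (cournotNash n θ ν δ pdag) = pdag := by
  have hδ' : δ ≠ 0 := ne_of_gt hδ
  have hlam' : lam ≠ 0 := ne_of_gt hlam
  have hn1 : ((n : ℝ) + 1) ≠ 0 := by positivity
  have hden : lam + (n : ℝ) * δ ≠ 0 := by positivity
  set J := onesMatrix n with hJ
  set Γ := cournotGamma n δ lam with hΓ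
  set Ω := cournotOmega n δ with hΩ
  -- M = I − ΓΩ, N its inverse
  set aM : ℝ := 2 * lam / δ with haM
  set bM : ℝ := (2 * δ - 2 * lam) / (δ * ((n : ℝ) + 1)) with hbM
  set aN : ℝ := δ / (2 * lam) with haN
  set bN : ℝ := δ * (lam - δ) / (2 * lam * (lam + (n : ℝ) * δ)) with hbN
  set M : Matrix (Fin n) (Fin n) ℝ := aM • 1 + bM • J with hM
  set N : Matrix (Fin n) (Fin n) ℝ := aN • 1 + bN • J with hN
  have hMdef : (1 : Matrix (Fin n) (Fin n) ℝ) - Γ * Ω = M := by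
    rw [hΓ, hΩ, hM]
    unfold cournotGamma cournotOmega
    rw [← hJ, form_mul]
    have e1 : (2 * lam - δ) * -(1 / δ) = 1 - aM := by
      rw [haM]; field_simp; try ring
    have e2 : (2 * lam - δ) * (1 / (δ * (↑n + 1))) + δ * -(1 / δ)
        + δ * (1 / (δ * (↑n + 1))) * ↑n = -bM := by
      rw [hbM]; field_simp; try ring
    rw [e1, e2]
    module
  have hform : ∀ a b c d : ℝ,
      (a • (1 : Matrix (Fin n) (Fin n) ℝ) + b • J) * (c • 1 + d • J)
      = (a * c) • (1 : Matrix (Fin n) (Fin n) ℝ) + (a * d + b * c + b * d * n) • J :=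
    fun a b c d => form_mul n a b c d
  have hac : aM * aN = 1 := by rw [haM, haN]; field_simp; try ring
  have hca : aN * aM = 1 := by rw [mul_comm]; exact hac
  have hMNJ : aM * bN + bM * aN + bM * bN * n = 0 := by
    rw [haM, hbM, haN, hbN]; field_simp; try ring
  have hNMJ : aN * bM + bN * aM + bN * bM * n = 0 := by
    rw [show aN * bM + bN * aM + bN * bM * (n : ℝ)
        = aM * bN + bM * aN + bM * bN * n by ring]
    exact hMNJ
  have hMN : M * N = 1 := by
    rw [hM, hN, hform, hac, hMNJ]; simp
  have hNM : N * M = 1 := by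
    rw [hM, hN, hform, hca, hNMJ]; simp
  -- rewrite the fixed-point equation
  set w : Fin n → ℝ :=
    Γ.mulVec (((θ - ν) / (δ * ((n : ℝ) + 1))) • (fun _ => (1 : ℝ))) with hw
  have hkey : ∀ p : Fin n → ℝ,
      Γ.mulVec (cournotNash n θ ν δ p) = p ↔ M.mulVec p = w := by
    intro p
    have h1 : Γ.mulVec (cournotNash n θ ν δ p)
        = w + (Γ * Ω).mulVec p := by
      unfold cournotNash
      rw [Matrix.mulVec_add, Matrix.mulVec_mulVec, ← hΩ, hw]
      try norm_num
    rw [h1, ← hMdef, Matrix.sub_mulVec, Matrix.one_mulVec]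
    constructor
    · intro h
      exact sub_eq_iff_eq_add.mpr h.symm
    · intro h
      exact (sub_eq_iff_eq_add.mp h).symm
  refine ⟨N.mulVec w, ?_, ?_⟩
  · exact (hkey _).mpr (by rw [Matrix.mulVec_mulVec, hMN, Matrix.one_mulVec])
  · intro q hq
    have hq' := (hkey q).mp hq
    calc q = (N * M).mulVec q := by rw [hNM, Matrix.one_mulVec]
    _ = N.mulVec (M.mulVec q) := by rw [Matrix.mulVec_mulVec]
    _ = N.mulVec w := by rw [hq']
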